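/- If a weighted graph (Γ,μ) satisfies (p0), (VD) and (TC), then the Green kernel mean value property (MVG) is equivalent to the mean value inequality (MV), and either of them implies the Green kernel bound (g01): g^{B(x,R)}(y,x) ≤ C·E(x,R)/V(x,d(x,y)) for all R>0, x∈Γ and y with d(x,y)>0. -/

import Mathlib

open Classical

noncomputable section

/-- A weighted graph: symmetric nonnegative edge weights, zero on the diagonal,
positive exactly on edges, with finitely many neighbours at each vertex. -/
structure WeightedGraph (V : Type*) where
  w : V → V → ℝ
  w_symm : ∀ x y, w x y = w y x
  w_nonneg : ∀ x y, 0 ≤ w x y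
  w_irrefl : ∀ x, w x x = 0
  locFin : ∀ x, {y | 0 < w x y}.Finite

/-- A space-time scale function is proper. -/
def properF (F : ℕ → ℝ) : Prop :=
  StrictMono F ∧
  (∃ D : ℝ, 0 < D ∧ ∀ R : ℕ, F (2 * R) ≤ D * F R) ∧
  (∀ R S : ℕ, F R + F S ≤ F (R + S)) ∧
  (∃ (A : ℕ) (B : ℝ), 1 < A ∧ 1 < B ∧ ∀ R : ℕ, B * F R ≤ F (A * R)) ∧
  (∃ c : ℝ, 0 < c ∧ ∀ R : ℕ, c * (R : ℝ) ^ 2 ≤ F R)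

/-- A proper scale function satisfying the strong anti-doubling property `B_F > A_F`. -/
def veryProperF (F : ℕ → ℝ) : Prop :=
  properF F ∧
  (∃ (A : ℕ) (B : ℝ), 1 < A ∧ (A : ℝ) < B ∧ ∀ R : ℕ, B * F R ≤ F (A * R))

/-- The (generalized) inverse of a scale function. -/
def finvF (F : ℕ → ℝ) (t : ℝ) : ℕ := sInf {R : ℕ | t ≤ F R}

/-- The sub-Gaussian kernel `k(n,R)`: the maximal integer `k ≥ 1` with
`n/k ≤ F(⌊R/k⌋)`, and `0` if there is none. -/
def kkerF (F : ℕ → ℝ) (n R : ℕ) : ℕ :=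
  sSup {k : ℕ | 1 ≤ k ∧ (n : ℝ) / (k : ℝ) ≤ F (R / k)}

namespace WeightedGraph

variable {V : Type*}

/-- The underlying simple graph. -/
def toSimpleGraph (G : WeightedGraph V) : SimpleGraph V where
  Adj x y := 0 < G.w x y
  symm := by
    constructor
    intro x y h
    rw [G.w_symm y x]
    exact h
  loopless := by
    constructor
    intro x h
    rw [G.w_irrefl x] at h
    exact lt_irrefl 0 h

/-- The graph (shortest path) distance. -/
def gdist (G : WeightedGraph V) (x y : V) : ℕ := G.toSimpleGraph.dist x y

/-- The open metric ball `B(x,r) = {y : d(x,y) < r}`. -/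
def ball (G : WeightedGraph V) (x : V) (r : ℝ) : Set V := {y | (G.gdist x y : ℝ) < r}

/-- The sphere `S(x,R) = {y : d(x,y) = R}`. -/
def sphere (G : WeightedGraph V) (x : V) (R : ℕ) : Set V := {y | G.gdist x y = R}

/-- The external boundary of a set. -/
def extBoundary (G : WeightedGraph V) (A : Set V) : Set V :=
  {y | y ∉ A ∧ ∃ x ∈ A, 0 < G.w x y}

/-- The vertex measure `μ(x) = Σ_{y ∼ x} μ_{xy}`. -/
def mu (G : WeightedGraph V) (x : V) : ℝ := ∑' y, G.w x y

/-- The volume `V(x,r) = μ(B(x,r))`. -/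
def vol (G : WeightedGraph V) (x : V) (r : ℝ) : ℝ := ∑' y : G.ball x r, G.mu y.1

/-- The volume of the annulus `v(x,s,r) = V(x,r) - V(x,s)`. -/
def annv (G : WeightedGraph V) (x : V) (s r : ℝ) : ℝ := G.vol x r - G.vol x s

/-- One-step transition probability `P(x,y) = μ_{xy}/μ(x)`. -/
def Pstep (G : WeightedGraph V) (x y : V) : ℝ := G.w x y / G.mu x

/-- `n`-step transition probability. -/
def Pn (G : WeightedGraph V) : ℕ → V → V → ℝ
  | 0, x, y => if x = y then 1 else 0
  | n + 1, x, y => ∑' z, G.Pstep x z * Pn G n z y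

/-- The heat kernel `p_n(x,y) = P_n(x,y)/μ(y)`. -/
def hk (G : WeightedGraph V) (n : ℕ) (x y : V) : ℝ := G.Pn n x y / G.mu y

/-- One step of the walk killed on exiting `A`. -/
def PstepA (G : WeightedGraph V) (A : Set V) (x y : V) : ℝ :=
  if x ∈ A ∧ y ∈ A then G.Pstep x y else 0

/-- `n`-step transition probability of the killed walk. -/
def PnA (G : WeightedGraph V) (A : Set V) : ℕ → V → V → ℝ
  | 0, x, y => if x = y ∧ x ∈ A then 1 else 0
  | n + 1, x, y => ∑' z, G.PstepA A x z * PnA G A n z y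

/-- The local Green kernel `g^A(y,z) = (Σ_k P_k^A(y,z))/μ(z)`. -/
def green (G : WeightedGraph V) (A : Set V) (y z : V) : ℝ :=
  (∑' k, G.PnA A k y z) / G.mu z

/-- The mean exit time `E_z(A) = Σ_{k≥0} P_z(T_A > k) = Σ_k Σ_{y} P_k^A(z,y)`. -/
def meanExit (G : WeightedGraph V) (A : Set V) (z : V) : ℝ :=
  ∑' (k : ℕ), ∑' (y : V), G.PnA A k z y

/-- `E(x,r)`: the mean exit time from the ball `B(x,r)` started at `x`. -/
def mexit (G : WeightedGraph V) (x : V) (r : ℝ) : ℝ := G.meanExit (G.ball x r) x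

/-- `e(x,t) = min{R ∈ ℕ : E(x,R) ≥ t}`, the inverse of the mean exit time. -/
def einv (G : WeightedGraph V) (x : V) (t : ℝ) : ℕ := sInf {R : ℕ | t ≤ G.mexit x R}

/-- `P(T_A < n)` for the walk started at `z`. -/
def exitProbLT (G : WeightedGraph V) (A : Set V) (z : V) (n : ℕ) : ℝ :=
  1 - ∑' y, G.PnA A (n - 1) z y

/-- The local sub-Gaussian kernel `k̲(x,n,R)`. -/
def lker (G : WeightedGraph V) (x : V) (n R : ℕ) : ℕ :=
  sSup {k : ℕ | 1 ≤ k ∧ (n : ℝ) / (k : ℝ) ≤ ⨅ y : G.ball x R, G.mexit y.1 ((R / k : ℕ) : ℝ)}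

/-- `u` is harmonic on `A`. -/
def Harmonic (G : WeightedGraph V) (A : Set V) (u : V → ℝ) : Prop :=
  ∀ x ∈ A, (∑' y, G.Pstep x y * u y) = u x

/-- The Dirichlet form (energy). -/
def dirichletEnergy (G : WeightedGraph V) (f : V → ℝ) : ℝ :=
  (1 / 2) * ∑' p : V × V, G.w p.1 p.2 * (f p.1 - f p.2) ^ 2

/-- The resistance between two disjoint sets. -/
def resistance (G : WeightedGraph V) (A B : Set V) : ℝ :=
  (sInf (G.dirichletEnergy '' {f | (∀ x ∈ A, f x = 1) ∧ ∀ x ∈ B, f x = 0}))⁻¹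

/-- The resistance of the annulus `ρ(x,s,r) = ρ(B(x,s), Γ∖B(x,r))`. -/
def rho (G : WeightedGraph V) (x : V) (s r : ℝ) : ℝ :=
  G.resistance (G.ball x s) (G.ball x r)ᶜ

/-- The kernel of the `(λ,m)`-resolvent `((λ+1)I - P)^{-m}`. -/
def resolventKer (G : WeightedGraph V) (lam : ℝ) (m : ℕ) (x y : V) : ℝ :=
  (∑' k : ℕ, (Nat.choose (k + m - 1) k : ℝ) * (1 + lam) ^ (-((m : ℤ) + (k : ℤ))) * G.Pn k x y) /
    G.mu y

/-- `F(R) = inf_x E(x,R)`. -/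
def Fm (G : WeightedGraph V) (R : ℕ) : ℝ := ⨅ x : V, G.mexit x R

/-- Condition `(p0)`: controlled weights. -/
def P0 (G : WeightedGraph V) (p0 : ℝ) : Prop :=
  ∀ x y : V, 0 < G.w x y → p0 ≤ G.w x y / G.mu x

/-- Condition `(VD)`: volume doubling. -/
def VD (G : WeightedGraph V) : Prop :=
  ∃ D : ℝ, 0 < D ∧ ∀ (x : V) (R : ℝ), 0 < R → G.vol x (2 * R) ≤ D * G.vol x R

/-- Condition `(TC)`: the time comparison principle. -/
def TC (G : WeightedGraph V) : Prop :=
  ∃ C : ℝ, 1 < C ∧ ∀ (x : V) (R : ℝ), 0 < R → ∀ y ∈ G.ball x R,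
    G.mexit x (2 * R) ≤ C * G.mexit y R

/-- Condition `(TD)`: time doubling. -/
def TD (G : WeightedGraph V) : Prop :=
  ∃ D : ℝ, 0 < D ∧ ∀ (x : V) (R : ℝ), 0 ≤ R → G.mexit x (2 * R) ≤ D * G.mexit x R

/-- Condition `(E)`: the mean exit time is uniform in the space. -/
def UniformE (G : WeightedGraph V) : Prop :=
  ∃ C : ℝ, 1 < C ∧ ∀ (x y : V) (R : ℝ), 0 < R → G.mexit x R ≤ C * G.mexit y R

/-- The mean value inequality `(MV)`. -/
def MV (G : WeightedGraph V) : Prop :=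
  ∃ C : ℝ, 0 < C ∧ ∀ (x : V) (R : ℝ) (u : V → ℝ), 0 < R → (∀ y, 0 ≤ u y) →
    G.Harmonic (G.ball x R) u →
    u x ≤ C / G.vol x R * ∑' y : G.ball x R, u y.1 * G.mu y.1

/-- The local diagonal upper estimate `(DUE)`. -/
def DUE (G : WeightedGraph V) : Prop :=
  ∃ C : ℝ, 0 < C ∧ ∀ (x : V) (n : ℕ), 0 < n →
    G.hk n x x ≤ C / G.vol x (G.einv x n)

/-- The off-diagonal upper estimate `(UE)`. -/
def UE (G : WeightedGraph V) : Prop :=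
  ∃ C β c : ℝ, 0 < C ∧ 1 < β ∧ 0 < c ∧ ∀ (x y : V) (n : ℕ), 0 < n →
    G.hk n x y ≤ C / G.vol x (G.einv x n) *
      Real.exp (-(c * (G.mexit x (G.gdist x y) / n) ^ ((1 : ℝ) / (β - 1))))

/-- A nonnegative Dirichlet solution of the heat equation `P^A u_n = u_{n+1}` up to time `N`. -/
def DirSol (G : WeightedGraph V) (A : Set V) (N : ℕ) (u : ℕ → V → ℝ) : Prop :=
  (∀ n y, 0 ≤ u n y) ∧ ∀ n, n < N → ∀ z ∈ A, (∑' y, G.PstepA A z y * u n y) = u (n + 1) z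

/-- The parabolic mean value inequality `(PMV)`. -/
def PMV (G : WeightedGraph V) : Prop :=
  ∃ c1 c2 C : ℝ, 0 ≤ c1 ∧ c1 < c2 ∧ 1 < C ∧
    ∀ (x : V) (R : ℝ) (u : ℕ → V → ℝ), 0 < R →
      G.DirSol (G.ball x R) ⌊c2 * G.mexit x R⌋₊ u →
      u ⌊c2 * G.mexit x R⌋₊ x ≤ C / (G.vol x R * G.mexit x R) *
        ∑ i ∈ Finset.Icc ⌊c1 * G.mexit x R⌋₊ ⌊c2 * G.mexit x R⌋₊,
          ∑' y : G.ball x R, u i y.1 * G.mu y.1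

/-- The skewed parabolic mean value inequality. -/
def SPMV (G : WeightedGraph V) : Prop :=
  ∃ c1 c2 C : ℝ, 0 < c1 ∧ c1 < c2 ∧ 1 ≤ C ∧
    ∀ (x : V) (R : ℝ) (y : V) (u : ℕ → V → ℝ), 0 < R → y ∈ G.ball x R →
      G.DirSol (G.ball x R) ⌊c2 * G.mexit x R⌋₊ u →
      u ⌊c2 * G.mexit x R⌋₊ x ≤ C / (G.vol y (2 * R) * G.mexit y (2 * R)) *
        ∑ i ∈ Finset.Icc ⌊c1 * G.mexit x R⌋₊ ⌊c2 * G.mexit x R⌋₊,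
          ∑' z : G.ball x R, u i z.1 * G.mu z.1

/-- The mean value property for Green kernels `(MVG)`. -/
def MVG (G : WeightedGraph V) : Prop :=
  ∃ C : ℝ, 1 < C ∧ ∀ (x : V) (R : ℝ) (y : V), 0 < R → 0 < G.gdist x y →
    G.green (G.ball x R) y x ≤ C / G.vol x (G.gdist x y) *
      ∑' z : G.ball x (G.gdist x y : ℝ), G.green (G.ball x R) y z.1 * G.mu z.1

/-- The Green kernel bound `(g01)`: `g^B(y,x) ≤ C·E(x,R)/V(x,d(x,y))`. -/
def G01 (G : WeightedGraph V) : Prop :=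
  ∃ C : ℝ, 1 < C ∧ ∀ (x : V) (R : ℝ) (y : V), 0 < R → 0 < G.gdist x y →
    G.green (G.ball x R) y x ≤ C * G.mexit x R / G.vol x (G.gdist x y)

/-- The elliptic Harnack inequality `(H)`. -/
def EH (G : WeightedGraph V) : Prop :=
  ∃ C : ℝ, 0 < C ∧ ∀ (x : V) (R : ℝ) (u : V → ℝ), 0 < R → (∀ y, 0 ≤ u y) →
    G.Harmonic (G.ball x (2 * R)) u → ∀ y ∈ G.ball x R, ∀ z ∈ G.ball x R, u y ≤ C * u z

/-- The sub-Gaussian upper estimate `(UE_F)` with respect to `F`. -/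
def UEF (G : WeightedGraph V) (F : ℕ → ℝ) : Prop :=
  ∃ C c : ℝ, 0 < C ∧ 0 < c ∧ ∀ (x y : V) (n : ℕ), 0 < n →
    G.hk n x y ≤ C / G.vol x (finvF F n) *
      Real.exp (-(c * (kkerF F n (G.gdist x y) : ℝ)))

/-- The sub-Gaussian lower estimate `(LE_F)` with respect to `F`. -/
def LEF (G : WeightedGraph V) (F : ℕ → ℝ) : Prop :=
  ∃ c C : ℝ, 0 < c ∧ 0 < C ∧ ∀ (x y : V) (n : ℕ), 0 < n →
    c / G.vol x (finvF F n) * Real.exp (-(C * (kkerF F n (G.gdist x y) : ℝ))) ≤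
      G.hk n x y + G.hk (n + 1) x y

/-- The `F`-parabolic Harnack inequality. -/
def PHF (G : WeightedGraph V) (F : ℕ → ℝ) : Prop :=
  ∀ c1 c2 c3 c4 η : ℝ, 0 < c1 → c1 < c2 → c2 < c3 → c3 < c4 → 0 < η → η < 1 →
    ∃ CH : ℝ, 0 < CH ∧ ∀ (x : V) (R k : ℕ) (u : ℕ → V → ℝ), 0 < R →
      (∀ n y, 0 ≤ u n y) →
      (∀ n : ℕ, k ≤ n → (n : ℝ) < (k : ℝ) + F ⌊c4 * (R : ℝ)⌋₊ → ∀ z ∈ G.ball x R,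
        (∑' y, G.Pstep z y * u n y) = u (n + 1) z) →
      ∀ (nm np : ℕ), ∀ xm ∈ G.ball x (η * R), ∀ xp ∈ G.ball x (η * R),
        (k : ℝ) + F ⌊c1 * (R : ℝ)⌋₊ ≤ (nm : ℝ) → (nm : ℝ) ≤ (k : ℝ) + F ⌊c2 * (R : ℝ)⌋₊ →
        (k : ℝ) + F ⌊c3 * (R : ℝ)⌋₊ ≤ (np : ℝ) → (np : ℝ) ≤ (k : ℝ) + F ⌊c4 * (R : ℝ)⌋₊ →
        (G.gdist xm xp : ℝ) ≤ (np : ℝ) - (nm : ℝ) →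
        u nm xm ≤ CH * (u np xp + u (np + 1) xp)

end WeightedGraph

open WeightedGraph

namespace WeightedGraph

variable {V : Type*}

lemma w_supp_finite (G : WeightedGraph V) (x : V) : (Function.support (G.w x)).Finite := by
  have h : Function.support (G.w x) = {y | 0 < G.w x y} := by
    ext y
    simp only [Function.support, Set.mem_setOf_eq, ne_eq]
    constructor
    · intro h; exact lt_of_le_of_ne (G.w_nonneg x y) (Ne.symm h)
    · intro h; exact ne_of_gt h
  rw [h]; exact G.locFin x

lemma summable_w (G : WeightedGraph V) (x : V) : Summable (G.w x) :=
  summable_of_finite_support (G.w_supp_finite x)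

lemma mu_nonneg (G : WeightedGraph V) (x : V) : 0 ≤ G.mu x :=
  tsum_nonneg (fun y => G.w_nonneg x y)

lemma w_le_mu (G : WeightedGraph V) (x y : V) : G.w x y ≤ G.mu x :=
  Summable.le_tsum (G.summable_w x) y (fun b _ => G.w_nonneg x b)

lemma mu_pos [Infinite V] (G : WeightedGraph V) (hconn : G.toSimpleGraph.Connected)
    (x : V) : 0 < G.mu x := by
  obtain ⟨y, hy⟩ := exists_ne x
  obtain ⟨p⟩ := hconn.preconnected x y
  cases p with
  | nil => exact absurd rfl (Ne.symm hy)
  | @cons _ z _ h q => exact lt_of_lt_of_le h (G.w_le_mu x z)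

lemma Pstep_nonneg (G : WeightedGraph V) (x y : V) : 0 ≤ G.Pstep x y :=
  div_nonneg (G.w_nonneg x y) (G.mu_nonneg x)

lemma Pstep_supp (G : WeightedGraph V) (x : V) :
    Function.support (G.Pstep x) ⊆ Function.support (G.w x) := by
  intro y hy
  simp only [Function.mem_support, Pstep, ne_eq] at hy ⊢
  intro h; exact hy (by rw [h, zero_div])

lemma summable_Pstep (G : WeightedGraph V) (x : V) : Summable (G.Pstep x) :=
  summable_of_finite_support ((G.w_supp_finite x).subset (G.Pstep_supp x))

lemma tsum_Pstep (G : WeightedGraph V) (x : V) (hx : 0 < G.mu x) :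
    ∑' y, G.Pstep x y = 1 := by
  unfold Pstep
  rw [tsum_div_const, div_eq_one_iff_eq (ne_of_gt hx)]
  rfl

lemma gdist_comm (G : WeightedGraph V) (x y : V) : G.gdist x y = G.gdist y x :=
  SimpleGraph.dist_comm

lemma gdist_eq_zero_iff (G : WeightedGraph V) (hconn : G.toSimpleGraph.Connected)
    (x y : V) : G.gdist x y = 0 ↔ x = y := hconn.dist_eq_zero_iff

lemma gdist_triangle (G : WeightedGraph V) (hconn : G.toSimpleGraph.Connected)
    (x y z : V) : G.gdist x z ≤ G.gdist x y + G.gdist y z := hconn.dist_triangle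

lemma gdist_adj_le (G : WeightedGraph V) {x y z : V} (hconn : G.toSimpleGraph.Connected)
    (h : 0 < G.w y z) : G.gdist x z ≤ G.gdist x y + 1 := by
  refine le_trans (G.gdist_triangle hconn x y z) ?_
  have : G.gdist y z ≤ 1 := SimpleGraph.dist_le (SimpleGraph.Walk.cons (show G.toSimpleGraph.Adj y z from h) SimpleGraph.Walk.nil)
  omega

lemma closedBall_finite (G : WeightedGraph V) (hconn : G.toSimpleGraph.Connected)
    (x : V) (n : ℕ) : {y | G.gdist x y ≤ n}.Finite := by
  induction n with
  | zero =>
    refine (Set.finite_singleton x).subset ?_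
    intro y hy
    simp only [Set.mem_setOf_eq, Nat.le_zero] at hy
    simp [((G.gdist_eq_zero_iff hconn x y).mp hy).symm]
  | succ n ih =>
    have hsub : {y | G.gdist x y ≤ n + 1} ⊆
        {y | G.gdist x y ≤ n} ∪ ⋃ z ∈ {y | G.gdist x y ≤ n}, {y | 0 < G.w z y} := by
      intro y hy
      simp only [Set.mem_setOf_eq] at hy
      by_cases hle : G.gdist x y ≤ n
      · exact Or.inl hle
      · have hd : G.gdist x y = n + 1 := by omega
        have hne : G.gdist x y ≠ 0 := by omega
        simp only [gdist] at hd hne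
        obtain ⟨p, hp⟩ := SimpleGraph.exists_walk_of_dist_ne_zero hne
        have hrev : ¬ p.reverse.Nil := by
          rw [SimpleGraph.Walk.nil_iff_length_eq, SimpleGraph.Walk.length_reverse, hp, hd]
          omega
        obtain ⟨z, hadj, q, hq⟩ := SimpleGraph.Walk.not_nil_iff.mp hrev
        have hqlen : q.length = n := by
          have := SimpleGraph.Walk.length_reverse p
          rw [hq, SimpleGraph.Walk.length_cons, hp, hd] at this
          omega
        have hz : G.gdist x z ≤ n := by
          rw [G.gdist_comm x z]
          calc G.toSimpleGraph.dist z x ≤ q.length := SimpleGraph.dist_le q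
          _ = n := hqlen
        right
        refine Set.mem_biUnion hz ?_
        have : G.toSimpleGraph.Adj z y := hadj.symm
        exact this
    exact (ih.union (ih.biUnion (fun z _ => G.locFin z))).subset hsub

lemma ball_finite (G : WeightedGraph V) (hconn : G.toSimpleGraph.Connected)
    (x : V) (r : ℝ) : (G.ball x r).Finite := by
  refine (G.closedBall_finite hconn x ⌈r⌉₊).subset ?_
  intro y hy
  simp only [ball, Set.mem_setOf_eq] at hy ⊢
  exact_mod_cast le_of_lt (lt_of_lt_of_le hy (Nat.le_ceil r))

lemma ball_mono (G : WeightedGraph V) (x : V) {r s : ℝ} (h : r ≤ s) :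
    G.ball x r ⊆ G.ball x s := fun y hy => lt_of_lt_of_le hy h

lemma mem_ball_self (G : WeightedGraph V) (x : V) {r : ℝ} (hr : 0 < r) :
    x ∈ G.ball x r := by
  simp only [ball, Set.mem_setOf_eq, gdist, SimpleGraph.dist_self, Nat.cast_zero]
  exact hr

lemma tsum_set_eq_sum {s : Set V} (hs : s.Finite) (f : V → ℝ) :
    ∑' y : s, f y = ∑ y ∈ hs.toFinset, f y := by
  rw [tsum_subtype s f]
  refine (tsum_eq_sum ?_).trans (Finset.sum_congr rfl ?_)
  · intro b hb
    exact Set.indicator_of_notMem (fun hbs => hb (hs.mem_toFinset.mpr hbs)) f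
  · intro b hb
    exact Set.indicator_of_mem (hs.mem_toFinset.mp hb) f

lemma vol_eq_sum (G : WeightedGraph V) (hconn : G.toSimpleGraph.Connected)
    (x : V) (r : ℝ) :
    G.vol x r = ∑ y ∈ (G.ball_finite hconn x r).toFinset, G.mu y :=
  tsum_set_eq_sum _ _

lemma vol_mono (G : WeightedGraph V) (hconn : G.toSimpleGraph.Connected)
    (x : V) {r s : ℝ} (h : r ≤ s) : G.vol x r ≤ G.vol x s := by
  rw [G.vol_eq_sum hconn x r, G.vol_eq_sum hconn x s]
  refine Finset.sum_le_sum_of_subset_of_nonneg ?_ (fun y _ _ => G.mu_nonneg y)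
  intro y hy
  simp only [Set.Finite.mem_toFinset] at hy ⊢
  exact G.ball_mono x h hy

lemma vol_pos [Infinite V] (G : WeightedGraph V) (hconn : G.toSimpleGraph.Connected)
    (x : V) {r : ℝ} (hr : 0 < r) : 0 < G.vol x r := by
  rw [G.vol_eq_sum hconn x r]
  refine Finset.sum_pos' (fun y _ => G.mu_nonneg y) ⟨x, ?_, G.mu_pos hconn x⟩
  simp only [Set.Finite.mem_toFinset]
  exact G.mem_ball_self x hr

lemma vol_one (G : WeightedGraph V) (hconn : G.toSimpleGraph.Connected) (x : V) :
    G.vol x 1 = G.mu x := by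
  have hb : G.ball x 1 = {x} := by
    ext y
    simp only [ball, Set.mem_setOf_eq, Set.mem_singleton_iff]
    constructor
    · intro hy
      have : G.gdist x y = 0 := by exact_mod_cast Nat.lt_one_iff.mp (by exact_mod_cast hy)
      exact ((G.gdist_eq_zero_iff hconn x y).mp this).symm
    · intro hy; subst hy
      simp [gdist, SimpleGraph.dist_self]
  rw [vol, hb]
  exact tsum_singleton x G.mu

end WeightedGraph
namespace WeightedGraph

variable {V : Type*}

/-- survival probability of the killed walk -/
def sv (G : WeightedGraph V) (A : Set V) (n : ℕ) (x : V) : ℝ := ∑' y, G.PnA A n x y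

lemma PstepA_nonneg (G : WeightedGraph V) (A : Set V) (x y : V) : 0 ≤ G.PstepA A x y := by
  unfold PstepA; split
  · exact G.Pstep_nonneg x y
  · exact le_refl 0

lemma PstepA_le_Pstep (G : WeightedGraph V) (A : Set V) (x y : V) :
    G.PstepA A x y ≤ G.Pstep x y := by
  unfold PstepA; split
  · exact le_refl _
  · exact G.Pstep_nonneg x y

lemma PstepA_supp (G : WeightedGraph V) (A : Set V) (x : V) :
    Function.support (G.PstepA A x) ⊆ Function.support (G.Pstep x) := by
  intro y hy
  simp only [Function.mem_support, PstepA, ne_eq] at hy ⊢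
  intro h; apply hy; split <;> simp [h]

lemma summable_PstepA (G : WeightedGraph V) (A : Set V) (x : V) :
    Summable (G.PstepA A x) :=
  summable_of_finite_support (((G.w_supp_finite x).subset (G.Pstep_supp x)).subset
    (G.PstepA_supp A x))

lemma PstepA_of_not_left (G : WeightedGraph V) {A : Set V} {x : V} (hx : x ∉ A) (y : V) :
    G.PstepA A x y = 0 := by
  unfold PstepA; rw [if_neg]; tauto

lemma PstepA_of_not_right (G : WeightedGraph V) {A : Set V} {y : V} (hy : y ∉ A) (x : V) :
    G.PstepA A x y = 0 := by
  unfold PstepA; rw [if_neg]; tauto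

lemma PstepA_eq (G : WeightedGraph V) {A : Set V} {x y : V} (hx : x ∈ A) (hy : y ∈ A) :
    G.PstepA A x y = G.Pstep x y := if_pos ⟨hx, hy⟩

lemma PnA_nonneg (G : WeightedGraph V) (A : Set V) (n : ℕ) (x y : V) :
    0 ≤ G.PnA A n x y := by
  induction n generalizing x y with
  | zero => unfold PnA; split <;> norm_num
  | succ n ih =>
    exact tsum_nonneg fun z => mul_nonneg (G.PstepA_nonneg A x z) (ih z y)

lemma PnA_of_not_left (G : WeightedGraph V) {A : Set V} {x : V} (hx : x ∉ A) (n : ℕ) (y : V) :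
    G.PnA A n x y = 0 := by
  cases n with
  | zero => unfold PnA; rw [if_neg]; tauto
  | succ n =>
    show (∑' z, G.PstepA A x z * G.PnA A n z y) = 0
    have h : ∀ z, G.PstepA A x z * G.PnA A n z y = 0 := fun z => by
      rw [G.PstepA_of_not_left hx, zero_mul]
    simp only [h, tsum_zero]

lemma PnA_of_not_right (G : WeightedGraph V) {A : Set V} {y : V} (hy : y ∉ A) (n : ℕ) (x : V) :
    G.PnA A n x y = 0 := by
  induction n generalizing x with
  | zero =>
    unfold PnA; rw [if_neg]; rintro ⟨rfl, hx⟩; exact hy hx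
  | succ n ih =>
    show (∑' z, G.PstepA A x z * G.PnA A n z y) = 0
    have h : ∀ z, G.PstepA A x z * G.PnA A n z y = 0 := fun z => by rw [ih z, mul_zero]
    simp only [h, tsum_zero]

lemma PnA_succ_sum (G : WeightedGraph V) {A : Set V} (hA : A.Finite) (n : ℕ) (x y : V) :
    G.PnA A (n + 1) x y = ∑ z ∈ hA.toFinset, G.PstepA A x z * G.PnA A n z y := by
  show (∑' z, G.PstepA A x z * G.PnA A n z y) = _
  apply tsum_eq_sum
  intro z hz
  rw [G.PstepA_of_not_right (fun h => hz (hA.mem_toFinset.mpr h)) x, zero_mul]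

lemma PnA_one (G : WeightedGraph V) (A : Set V) (x y : V) :
    G.PnA A 1 x y = G.PstepA A x y := by
  show (∑' z, G.PstepA A x z * G.PnA A 0 z y) = _
  have h : ∀ z, G.PstepA A x z * G.PnA A 0 z y =
      (if z = y then G.PstepA A x y else 0) := by
    intro z
    show G.PstepA A x z * (if z = y ∧ z ∈ A then 1 else 0) = _
    by_cases hzy : z = y
    · subst hzy
      by_cases hz : z ∈ A
      · rw [if_pos ⟨rfl, hz⟩, if_pos rfl, mul_one]
      · rw [if_neg (fun h => hz h.2), mul_zero, if_pos rfl,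
          G.PstepA_of_not_right hz x]
    · rw [if_neg (fun h => hzy h.1), mul_zero, if_neg hzy]
  rw [tsum_congr h, tsum_ite_eq y (fun _ => G.PstepA A x y)]

lemma PnA_succ_right (G : WeightedGraph V) {A : Set V} (hA : A.Finite) (n : ℕ) (x y : V) :
    G.PnA A (n + 1) x y = ∑ z ∈ hA.toFinset, G.PnA A n x z * G.PstepA A z y := by
  induction n generalizing x y with
  | zero =>
    rw [G.PnA_one A x y]
    by_cases hx : x ∈ A
    · rw [Finset.sum_eq_single_of_mem x (hA.mem_toFinset.mpr hx)]
      · show G.PstepA A x y = G.PnA A 0 x x * G.PstepA A x y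
        show G.PstepA A x y = (if x = x ∧ x ∈ A then (1:ℝ) else 0) * G.PstepA A x y
        rw [if_pos ⟨rfl, hx⟩, one_mul]
      · intro z _ hzx
        show G.PnA A 0 x z * G.PstepA A z y = 0
        show (if x = z ∧ x ∈ A then (1:ℝ) else 0) * G.PstepA A z y = 0
        rw [if_neg (fun h => hzx h.1.symm), zero_mul]
    · rw [G.PstepA_of_not_left hx y]
      symm
      apply Finset.sum_eq_zero
      intro z _
      rw [G.PnA_of_not_left hx 0 z, zero_mul]
  | succ n ih =>
    rw [G.PnA_succ_sum hA (n+1) x y]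
    have h1 : ∀ z, G.PstepA A x z * G.PnA A (n+1) z y =
        ∑ w ∈ hA.toFinset, G.PstepA A x z * (G.PnA A n z w * G.PstepA A w y) := by
      intro z
      rw [ih z y, Finset.mul_sum]
    rw [Finset.sum_congr rfl (fun z _ => h1 z), Finset.sum_comm]
    apply Finset.sum_congr rfl
    intro w _
    rw [G.PnA_succ_sum hA n x w, Finset.sum_mul]
    apply Finset.sum_congr rfl
    intro z _
    ring

lemma sv_nonneg (G : WeightedGraph V) (A : Set V) (n : ℕ) (x : V) : 0 ≤ G.sv A n x :=
  tsum_nonneg fun y => G.PnA_nonneg A n x y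

lemma sv_eq_sum (G : WeightedGraph V) {A : Set V} (hA : A.Finite) (n : ℕ) (x : V) :
    G.sv A n x = ∑ y ∈ hA.toFinset, G.PnA A n x y := by
  apply tsum_eq_sum
  intro y hy
  exact G.PnA_of_not_right (fun h => hy (hA.mem_toFinset.mpr h)) n x

lemma sv_of_not_mem (G : WeightedGraph V) {A : Set V} {x : V} (hx : x ∉ A) (n : ℕ) :
    G.sv A n x = 0 := by
  unfold sv
  simp only [G.PnA_of_not_left hx, tsum_zero]

lemma sv_zero_of_mem (G : WeightedGraph V) {A : Set V} {x : V} (hx : x ∈ A) :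
    G.sv A 0 x = 1 := by
  unfold sv
  have h : ∀ y, G.PnA A 0 x y = (if y = x then (1:ℝ) else 0) := by
    intro y
    show (if x = y ∧ x ∈ A then (1:ℝ) else 0) = _
    by_cases hxy : x = y
    · subst hxy; rw [if_pos ⟨rfl, hx⟩, if_pos rfl]
    · rw [if_neg (fun h => hxy h.1), if_neg (fun h => hxy h.symm)]
  rw [tsum_congr h, tsum_ite_eq x (fun _ => (1:ℝ))]

lemma sv_zero_le_one (G : WeightedGraph V) (A : Set V) (x : V) : G.sv A 0 x ≤ 1 := by
  by_cases hx : x ∈ A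
  · rw [G.sv_zero_of_mem hx]
  · rw [G.sv_of_not_mem hx]; norm_num

lemma sv_succ (G : WeightedGraph V) {A : Set V} (hA : A.Finite) (n : ℕ) (x : V) :
    G.sv A (n + 1) x = ∑ z ∈ hA.toFinset, G.PstepA A x z * G.sv A n z := by
  rw [G.sv_eq_sum hA]
  have h : ∀ y ∈ hA.toFinset, G.PnA A (n+1) x y =
      ∑ z ∈ hA.toFinset, G.PstepA A x z * G.PnA A n z y :=
    fun y _ => G.PnA_succ_sum hA n x y
  rw [Finset.sum_congr rfl h, Finset.sum_comm]
  apply Finset.sum_congr rfl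
  intro z _
  rw [G.sv_eq_sum hA, Finset.mul_sum]

lemma sum_Pstep_le_one [Infinite V] (G : WeightedGraph V)
    (hconn : G.toSimpleGraph.Connected) (x : V) (s : Finset V) :
    ∑ z ∈ s, G.Pstep x z ≤ 1 := by
  rw [← G.tsum_Pstep x (G.mu_pos hconn x)]
  exact Summable.sum_le_tsum s (fun z _ => G.Pstep_nonneg x z) (G.summable_Pstep x)

lemma sum_PstepA_le_one [Infinite V] (G : WeightedGraph V)
    (hconn : G.toSimpleGraph.Connected) (A : Set V) (x : V) (s : Finset V) :
    ∑ z ∈ s, G.PstepA A x z ≤ 1 :=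
  le_trans (Finset.sum_le_sum (fun z _ => G.PstepA_le_Pstep A x z))
    (G.sum_Pstep_le_one hconn x s)

lemma sv_le_one [Infinite V] (G : WeightedGraph V) (hconn : G.toSimpleGraph.Connected)
    {A : Set V} (hA : A.Finite) (n : ℕ) (x : V) : G.sv A n x ≤ 1 := by
  induction n generalizing x with
  | zero => exact G.sv_zero_le_one A x
  | succ n ih =>
    rw [G.sv_succ hA]
    calc ∑ z ∈ hA.toFinset, G.PstepA A x z * G.sv A n z
        ≤ ∑ z ∈ hA.toFinset, G.PstepA A x z := by
          apply Finset.sum_le_sum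
          intro z _
          nth_rewrite 2 [← mul_one (G.PstepA A x z)]
          exact mul_le_mul_of_nonneg_left (ih z) (G.PstepA_nonneg A x z)
      _ ≤ 1 := G.sum_PstepA_le_one hconn A x _

lemma sv_succ_le [Infinite V] (G : WeightedGraph V) (hconn : G.toSimpleGraph.Connected)
    {A : Set V} (hA : A.Finite) (n : ℕ) (x : V) : G.sv A (n + 1) x ≤ G.sv A n x := by
  induction n generalizing x with
  | zero =>
    by_cases hx : x ∈ A
    · rw [G.sv_zero_of_mem hx]
      exact G.sv_le_one hconn hA 1 x
    · rw [G.sv_of_not_mem hx, G.sv_of_not_mem hx]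
  | succ n ih =>
    rw [G.sv_succ hA (n+1) x, G.sv_succ hA n x]
    apply Finset.sum_le_sum
    intro z _
    exact mul_le_mul_of_nonneg_left (ih z) (G.PstepA_nonneg A x z)

lemma sv_antitone [Infinite V] (G : WeightedGraph V) (hconn : G.toSimpleGraph.Connected)
    {A : Set V} (hA : A.Finite) {m n : ℕ} (h : m ≤ n) (x : V) :
    G.sv A n x ≤ G.sv A m x := by
  induction n with
  | zero => rw [Nat.le_zero.mp h]
  | succ n ih =>
    rcases Nat.lt_or_ge m (n+1) with hm | hm
    · exact le_trans (G.sv_succ_le hconn hA n x) (ih (by omega))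
    · have : m = n + 1 := by omega
      rw [this]

lemma sv_submult (G : WeightedGraph V) {A : Set V} (hA : A.Finite) {m : ℕ} {c : ℝ}
    (hc : 0 ≤ c) (h : ∀ z, G.sv A m z ≤ c) (n : ℕ) (x : V) :
    G.sv A (n + m) x ≤ c * G.sv A n x := by
  induction n generalizing x with
  | zero =>
    by_cases hx : x ∈ A
    · rw [Nat.zero_add, G.sv_zero_of_mem hx, mul_one]; exact h x
    · rw [Nat.zero_add, G.sv_of_not_mem hx, G.sv_of_not_mem hx, mul_zero]
  | succ n ih =>
    have : n + 1 + m = (n + m) + 1 := by omega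
    rw [this, G.sv_succ hA, G.sv_succ hA, Finset.mul_sum]
    apply Finset.sum_le_sum
    intro z _
    rw [← mul_assoc, mul_comm c (G.PstepA A x z), mul_assoc]
    exact mul_le_mul_of_nonneg_left (ih z) (G.PstepA_nonneg A x z)

end WeightedGraph
namespace WeightedGraph

variable {V : Type*}

lemma Pstep_le_one [Infinite V] (G : WeightedGraph V) (hconn : G.toSimpleGraph.Connected)
    (x y : V) : G.Pstep x y ≤ 1 := by
  unfold Pstep
  rw [div_le_one (G.mu_pos hconn x)]
  exact G.w_le_mu x y

lemma p0_le_one [Infinite V] (G : WeightedGraph V) (hconn : G.toSimpleGraph.Connected)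
    {p0 : ℝ} (hP0 : G.P0 p0) : p0 ≤ 1 := by
  obtain ⟨x⟩ : Nonempty V := inferInstance
  obtain ⟨y, hy⟩ := exists_ne x
  obtain ⟨p⟩ := hconn.preconnected x y
  cases p with
  | nil => exact absurd rfl (Ne.symm hy)
  | @cons _ z _ h q =>
    exact le_trans (hP0 x z h) (G.Pstep_le_one hconn x z)

lemma sv_le_of_walk [Infinite V] (G : WeightedGraph V) (hconn : G.toSimpleGraph.Connected)
    {p0 : ℝ} (hp0 : 0 < p0) (hP0 : G.P0 p0)
    {A : Set V} (hA : A.Finite) {x b : V} (p : G.toSimpleGraph.Walk x b) (hb : b ∉ A) :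
    ∀ n, p.length ≤ n → G.sv A n x ≤ 1 - p0 ^ p.length := by
  have hp0le1 : p0 ≤ 1 := G.p0_le_one hconn hP0
  induction p with
  | nil =>
    intro n _
    rw [G.sv_of_not_mem hb n]
    simp
  | @cons x' z b' h q ih =>
    intro n hn
    rw [SimpleGraph.Walk.length_cons] at hn ⊢
    have hpowq : (0:ℝ) ≤ p0 ^ q.length := pow_nonneg (le_of_lt hp0) _
    have hpow1 : p0 ^ (q.length + 1) ≤ p0 ^ 1 :=
      pow_le_pow_of_le_one (le_of_lt hp0) hp0le1 (by omega)
    rw [pow_one] at hpow1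
    by_cases hx : x' ∈ A
    · obtain ⟨m, rfl⟩ : ∃ m, n = m + 1 := ⟨n - 1, by omega⟩
      have hm : q.length ≤ m := by omega
      rw [G.sv_succ hA m x']
      have hPz : p0 ≤ G.Pstep x' z := hP0 x' z h
      by_cases hz : z ∈ A
      · have hz' : z ∈ hA.toFinset := hA.mem_toFinset.mpr hz
        rw [← Finset.add_sum_erase _ _ hz']
        have h1 : G.PstepA A x' z * G.sv A m z ≤
            G.PstepA A x' z * (1 - p0 ^ q.length) :=
          mul_le_mul_of_nonneg_left (ih hb m hm) (G.PstepA_nonneg A x' z)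
        have h2 : ∑ w ∈ hA.toFinset.erase z, G.PstepA A x' w * G.sv A m w ≤
            ∑ w ∈ hA.toFinset.erase z, G.PstepA A x' w := by
          apply Finset.sum_le_sum
          intro w _
          nth_rewrite 2 [← mul_one (G.PstepA A x' w)]
          exact mul_le_mul_of_nonneg_left (G.sv_le_one hconn hA m w)
            (G.PstepA_nonneg A x' w)
        have h3 : ∑ w ∈ hA.toFinset.erase z, G.PstepA A x' w =
            (∑ w ∈ hA.toFinset, G.PstepA A x' w) - G.PstepA A x' z := by
          rw [← Finset.add_sum_erase _ _ hz']; ring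
        have h4 : (∑ w ∈ hA.toFinset, G.PstepA A x' w) ≤ 1 :=
          G.sum_PstepA_le_one hconn A x' _
        have h5 : G.PstepA A x' z = G.Pstep x' z := G.PstepA_eq hx hz
        have h6 : p0 * p0 ^ q.length ≤ G.Pstep x' z * p0 ^ q.length :=
          mul_le_mul_of_nonneg_right hPz hpowq
        calc G.PstepA A x' z * G.sv A m z +
              ∑ w ∈ hA.toFinset.erase z, G.PstepA A x' w * G.sv A m w
            ≤ G.PstepA A x' z * (1 - p0 ^ q.length) +
              ((∑ w ∈ hA.toFinset, G.PstepA A x' w) - G.PstepA A x' z) := by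
              rw [← h3]; exact add_le_add h1 h2
          _ = (∑ w ∈ hA.toFinset, G.PstepA A x' w) - G.PstepA A x' z * p0 ^ q.length := by
              ring
          _ ≤ 1 - G.Pstep x' z * p0 ^ q.length := by rw [h5]; linarith
          _ ≤ 1 - p0 ^ (q.length + 1) := by rw [pow_succ, mul_comm (p0 ^ q.length) p0]; linarith
      · have hz' : z ∉ hA.toFinset := fun hh => hz (hA.mem_toFinset.mp hh)
        have h2 : ∑ w ∈ hA.toFinset, G.PstepA A x' w * G.sv A m w ≤
            ∑ w ∈ hA.toFinset, G.PstepA A x' w := by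
          apply Finset.sum_le_sum
          intro w _
          nth_rewrite 2 [← mul_one (G.PstepA A x' w)]
          exact mul_le_mul_of_nonneg_left (G.sv_le_one hconn hA m w)
            (G.PstepA_nonneg A x' w)
        have h3 : ∑ w ∈ hA.toFinset, G.PstepA A x' w ≤
            ∑ w ∈ hA.toFinset, G.Pstep x' w :=
          Finset.sum_le_sum (fun w _ => G.PstepA_le_Pstep A x' w)
        have h4 : (∑ w ∈ hA.toFinset, G.Pstep x' w) + G.Pstep x' z ≤ 1 := by
          have : ∑ w ∈ insert z hA.toFinset, G.Pstep x' w ≤ 1 :=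
            G.sum_Pstep_le_one hconn x' _
          rwa [Finset.sum_insert hz', add_comm] at this
        have hPz : p0 ≤ G.Pstep x' z := hP0 x' z h
        calc ∑ w ∈ hA.toFinset, G.PstepA A x' w * G.sv A m w
            ≤ 1 - G.Pstep x' z := by linarith
          _ ≤ 1 - p0 := by linarith
          _ ≤ 1 - p0 ^ (q.length + 1) := by linarith
    · rw [G.sv_of_not_mem hx n]
      have : p0 ^ (q.length + 1) ≤ 1 := pow_le_one₀ (le_of_lt hp0) hp0le1
      linarith

lemma exists_uniform_decay [Infinite V] (G : WeightedGraph V)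
    (hconn : G.toSimpleGraph.Connected) {p0 : ℝ} (hp0 : 0 < p0) (hP0 : G.P0 p0)
    {A : Set V} (hA : A.Finite) :
    ∃ (N : ℕ) (c : ℝ), 0 < N ∧ 0 < c ∧ c < 1 ∧ ∀ x, G.sv A N x ≤ c := by
  have hp0le1 : p0 ≤ 1 := G.p0_le_one hconn hP0
  obtain ⟨b, hb⟩ := hA.infinite_compl.nonempty
  set L : V → ℕ := fun x => G.toSimpleGraph.dist x b with hL
  set N : ℕ := (hA.toFinset.sup L) + 1 with hN
  refine ⟨N, max (1 - p0 ^ N) 2⁻¹, hN ▸ Nat.succ_pos _, lt_max_of_lt_right (by norm_num), ?_, ?_⟩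
  · apply max_lt
    · have : (0:ℝ) < p0 ^ N := pow_pos hp0 N
      linarith
    · norm_num
  · intro x
    by_cases hx : x ∈ A
    · obtain ⟨p, hp⟩ := hconn.exists_walk_length_eq_dist x b
      have hlen : p.length ≤ N := by
        rw [hp]
        have h1 : L x ≤ hA.toFinset.sup L := Finset.le_sup (hA.mem_toFinset.mpr hx)
        rw [hL] at h1
        rw [hN, hL]
        simp only at h1
        omega
      have h1 := G.sv_le_of_walk hconn hp0 hP0 hA p hb N hlen
      refine le_trans h1 (le_max_of_le_left ?_)
      have : p0 ^ N ≤ p0 ^ p.length :=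
        pow_le_pow_of_le_one (le_of_lt hp0) hp0le1 hlen
      linarith
    · rw [G.sv_of_not_mem hx N]
      refine le_max_of_le_right (by norm_num)

lemma exists_geom [Infinite V] (G : WeightedGraph V)
    (hconn : G.toSimpleGraph.Connected) {p0 : ℝ} (hp0 : 0 < p0) (hP0 : G.P0 p0)
    {A : Set V} (hA : A.Finite) :
    ∃ (C r : ℝ), 0 < C ∧ 0 ≤ r ∧ r < 1 ∧ ∀ n x, G.sv A n x ≤ C * r ^ n := by
  obtain ⟨N, c, hNpos, hc0, hc1, hc⟩ := G.exists_uniform_decay hconn hp0 hP0 hA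
  have hgeom : ∀ k x, G.sv A (k * N) x ≤ c ^ k := by
    intro k
    induction k with
    | zero => intro x; simpa using G.sv_zero_le_one A x
    | succ k ih =>
      intro x
      have h1 : G.sv A (k * N + N) x ≤ c * G.sv A (k * N) x :=
        G.sv_submult hA (le_of_lt hc0) hc (k * N) x
      have : (k+1) * N = k * N + N := by ring
      rw [this, pow_succ, mul_comm (c ^ k) c]
      exact le_trans h1 (mul_le_mul_of_nonneg_left (ih x) (le_of_lt hc0))
  set r : ℝ := c ^ ((N:ℝ)⁻¹) with hr
  have hNR : (0:ℝ) < (N:ℝ) := by exact_mod_cast hNpos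
  have hr0 : 0 < r := Real.rpow_pos_of_pos hc0 _
  have hr1 : r < 1 := Real.rpow_lt_one (le_of_lt hc0) hc1 (by positivity)
  refine ⟨c⁻¹, r, by positivity, le_of_lt hr0, hr1, ?_⟩
  intro n x
  set k := n / N with hk
  have hkn : k * N ≤ n := Nat.div_mul_le_self n N
  have hnk : n < (k + 1) * N :=
    (Nat.div_lt_iff_lt_mul hNpos).mp (by rw [hk]; exact Nat.lt_succ_self _)
  have h1 : G.sv A n x ≤ c ^ k :=
    le_trans (G.sv_antitone hconn hA hkn x) (hgeom k x)
  refine le_trans h1 ?_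
  have hrn : r ^ n = c ^ ((n:ℝ) / (N:ℝ)) := by
    rw [hr, ← Real.rpow_natCast (c ^ ((N:ℝ)⁻¹)) n, ← Real.rpow_mul (le_of_lt hc0),
      inv_mul_eq_div]
  have hck : (c : ℝ) ^ k = c ^ ((k:ℝ)) := (Real.rpow_natCast c k).symm
  rw [hrn, hck, ← Real.rpow_neg_one c, ← Real.rpow_add hc0]
  apply Real.rpow_le_rpow_of_exponent_ge hc0 (le_of_lt hc1)
  have hcast : (n:ℝ) ≤ ((k:ℝ) + 1) * (N:ℝ) := by exact_mod_cast le_of_lt hnk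
  have hdiv : (n:ℝ)/(N:ℝ) ≤ (k:ℝ) + 1 := (div_le_iff₀ hNR).mpr (by linarith)
  linarith

lemma summable_sv [Infinite V] (G : WeightedGraph V)
    (hconn : G.toSimpleGraph.Connected) {p0 : ℝ} (hp0 : 0 < p0) (hP0 : G.P0 p0)
    {A : Set V} (hA : A.Finite) (x : V) : Summable (fun n => G.sv A n x) := by
  obtain ⟨C, r, hC, hr0, hr1, h⟩ := G.exists_geom hconn hp0 hP0 hA
  exact Summable.of_nonneg_of_le (fun n => G.sv_nonneg A n x) (fun n => h n x)
    ((summable_geometric_of_lt_one hr0 hr1).mul_left C)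

lemma tendsto_sv [Infinite V] (G : WeightedGraph V)
    (hconn : G.toSimpleGraph.Connected) {p0 : ℝ} (hp0 : 0 < p0) (hP0 : G.P0 p0)
    {A : Set V} (hA : A.Finite) (x : V) :
    Filter.Tendsto (fun n => G.sv A n x) Filter.atTop (nhds 0) :=
  (G.summable_sv hconn hp0 hP0 hA x).tendsto_atTop_zero

end WeightedGraph
namespace WeightedGraph

variable {V : Type*}

lemma summable_PstepA_mul (G : WeightedGraph V) (A : Set V) (x : V) (f : V → ℝ) :
    Summable (fun z => G.PstepA A x z * f z) := by
  apply summable_of_finite_support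
  apply (((G.w_supp_finite x).subset (G.Pstep_supp x)).subset (G.PstepA_supp A x)).subset
  intro z hz
  simp only [Function.mem_support, ne_eq] at hz ⊢
  intro h; exact hz (by rw [h, zero_mul])

lemma PstepA_mono (G : WeightedGraph V) {A A' : Set V} (h : A ⊆ A') (x y : V) :
    G.PstepA A x y ≤ G.PstepA A' x y := by
  unfold PstepA
  by_cases hxy : x ∈ A ∧ y ∈ A
  · rw [if_pos hxy, if_pos ⟨h hxy.1, h hxy.2⟩]
  · rw [if_neg hxy]
    split
    · exact G.Pstep_nonneg x y
    · exact le_refl 0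

lemma PnA_mono (G : WeightedGraph V) {A A' : Set V} (h : A ⊆ A') (n : ℕ) (x y : V) :
    G.PnA A n x y ≤ G.PnA A' n x y := by
  induction n generalizing x with
  | zero =>
    show (if x = y ∧ x ∈ A then (1:ℝ) else 0) ≤ (if x = y ∧ x ∈ A' then (1:ℝ) else 0)
    by_cases hxy : x = y ∧ x ∈ A
    · rw [if_pos hxy, if_pos ⟨hxy.1, h hxy.2⟩]
    · rw [if_neg hxy]
      split <;> norm_num
  | succ n ih =>
    show (∑' z, G.PstepA A x z * G.PnA A n z y) ≤ (∑' z, G.PstepA A' x z * G.PnA A' n z y)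
    refine Summable.tsum_le_tsum ?_ (G.summable_PstepA_mul A x _) (G.summable_PstepA_mul A' x _)
    intro z
    exact mul_le_mul (G.PstepA_mono h x z) (ih z) (G.PnA_nonneg A n z y)
      (G.PstepA_nonneg A' x z)

lemma summable_PnA_right (G : WeightedGraph V) {A : Set V} (hA : A.Finite)
    (n : ℕ) (x : V) : Summable (fun y => G.PnA A n x y) := by
  apply summable_of_finite_support
  apply hA.subset
  intro y hy
  simp only [Function.mem_support, ne_eq] at hy
  by_contra hyA
  exact hy (G.PnA_of_not_right hyA n x)

lemma sv_mono_set (G : WeightedGraph V) {A A' : Set V} (hA : A.Finite) (hA' : A'.Finite)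
    (h : A ⊆ A') (n : ℕ) (x : V) : G.sv A n x ≤ G.sv A' n x :=
  Summable.tsum_le_tsum (fun y => G.PnA_mono h n x y) (G.summable_PnA_right hA n x)
    (G.summable_PnA_right hA' n x)

lemma PnA_le_sv (G : WeightedGraph V) {A : Set V} (hA : A.Finite) (k : ℕ) (y z : V) :
    G.PnA A k y z ≤ G.sv A k y := by
  by_cases hz : z ∈ A
  · rw [G.sv_eq_sum hA]
    exact Finset.single_le_sum (fun w _ => G.PnA_nonneg A k y w) (hA.mem_toFinset.mpr hz)
  · rw [G.PnA_of_not_right hz k y]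
    exact G.sv_nonneg A k y

lemma summable_PnA_k [Infinite V] (G : WeightedGraph V)
    (hconn : G.toSimpleGraph.Connected) {p0 : ℝ} (hp0 : 0 < p0) (hP0 : G.P0 p0)
    {A : Set V} (hA : A.Finite) (y z : V) : Summable (fun k => G.PnA A k y z) :=
  Summable.of_nonneg_of_le (fun k => G.PnA_nonneg A k y z)
    (fun k => G.PnA_le_sv hA k y z) (G.summable_sv hconn hp0 hP0 hA y)

/-- total Green mass `G^A(y,z)` -/
def Gs (G : WeightedGraph V) (A : Set V) (y z : V) : ℝ := ∑' k, G.PnA A k y z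

lemma green_eq (G : WeightedGraph V) (A : Set V) (y z : V) :
    G.green A y z = G.Gs A y z / G.mu z := rfl

lemma Gs_nonneg (G : WeightedGraph V) (A : Set V) (y z : V) : 0 ≤ G.Gs A y z :=
  tsum_nonneg fun k => G.PnA_nonneg A k y z

lemma green_nonneg (G : WeightedGraph V) (A : Set V) (y z : V) : 0 ≤ G.green A y z :=
  div_nonneg (G.Gs_nonneg A y z) (G.mu_nonneg z)

lemma Gs_of_not_left (G : WeightedGraph V) {A : Set V} {y : V} (hy : y ∉ A) (z : V) :
    G.Gs A y z = 0 := by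
  unfold Gs
  simp only [G.PnA_of_not_left hy, tsum_zero]

lemma Gs_of_not_right (G : WeightedGraph V) {A : Set V} {z : V} (hz : z ∉ A) (y : V) :
    G.Gs A y z = 0 := by
  unfold Gs
  simp only [G.PnA_of_not_right hz, tsum_zero]

lemma green_of_not_left (G : WeightedGraph V) {A : Set V} {y : V} (hy : y ∉ A) (z : V) :
    G.green A y z = 0 := by
  rw [green_eq, G.Gs_of_not_left hy, zero_div]

lemma meanExit_eq_tsum_sv (G : WeightedGraph V) (A : Set V) (x : V) :
    G.meanExit A x = ∑' k, G.sv A k x := rfl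

lemma meanExit_nonneg (G : WeightedGraph V) (A : Set V) (x : V) :
    0 ≤ G.meanExit A x :=
  tsum_nonneg fun k => G.sv_nonneg A k x

lemma mexit_nonneg (G : WeightedGraph V) (x : V) (r : ℝ) : 0 ≤ G.mexit x r :=
  G.meanExit_nonneg _ x

lemma meanExit_mono [Infinite V] (G : WeightedGraph V)
    (hconn : G.toSimpleGraph.Connected) {p0 : ℝ} (hp0 : 0 < p0) (hP0 : G.P0 p0)
    {A A' : Set V} (hA : A.Finite) (hA' : A'.Finite) (h : A ⊆ A') (x : V) :
    G.meanExit A x ≤ G.meanExit A' x := by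
  rw [G.meanExit_eq_tsum_sv A x, G.meanExit_eq_tsum_sv A' x]
  exact Summable.tsum_le_tsum (fun k => G.sv_mono_set hA hA' h k x)
    (G.summable_sv hconn hp0 hP0 hA x) (G.summable_sv hconn hp0 hP0 hA' x)

lemma sum_Gs_eq_meanExit [Infinite V] (G : WeightedGraph V)
    (hconn : G.toSimpleGraph.Connected) {p0 : ℝ} (hp0 : 0 < p0) (hP0 : G.P0 p0)
    {A : Set V} (hA : A.Finite) (y : V) :
    ∑ z ∈ hA.toFinset, G.Gs A y z = G.meanExit A y := by
  rw [G.meanExit_eq_tsum_sv A y]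
  unfold Gs
  rw [← Summable.tsum_finsetSum (fun z _ => G.summable_PnA_k hconn hp0 hP0 hA y z)]
  exact tsum_congr fun k => (G.sv_eq_sum hA k y).symm

lemma PstepA_rev [Infinite V] (G : WeightedGraph V)
    (hconn : G.toSimpleGraph.Connected) (A : Set V) (y w : V) :
    G.mu y * G.PstepA A y w = G.mu w * G.PstepA A w y := by
  unfold PstepA
  by_cases h : y ∈ A ∧ w ∈ A
  · rw [if_pos h, if_pos ⟨h.2, h.1⟩]
    unfold Pstep
    have hy := ne_of_gt (G.mu_pos hconn y)
    have hw := ne_of_gt (G.mu_pos hconn w)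
    field_simp
    rw [G.w_symm y w]
  · rw [if_neg h, if_neg (fun hh => h ⟨hh.2, hh.1⟩), mul_zero, mul_zero]

lemma PnA_rev [Infinite V] (G : WeightedGraph V)
    (hconn : G.toSimpleGraph.Connected) {A : Set V} (hA : A.Finite) (n : ℕ) (y z : V) :
    G.mu y * G.PnA A n y z = G.mu z * G.PnA A n z y := by
  induction n generalizing y z with
  | zero =>
    show G.mu y * (if y = z ∧ y ∈ A then (1:ℝ) else 0) =
      G.mu z * (if z = y ∧ z ∈ A then (1:ℝ) else 0)
    by_cases hyz : y = z
    · subst hyz; rfl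
    · rw [if_neg (fun h => hyz h.1), if_neg (fun h => hyz h.1.symm), mul_zero, mul_zero]
  | succ n ih =>
    rw [G.PnA_succ_sum hA n y z, G.PnA_succ_right hA n z y, Finset.mul_sum,
      Finset.mul_sum]
    apply Finset.sum_congr rfl
    intro w _
    calc G.mu y * (G.PstepA A y w * G.PnA A n w z)
        = (G.mu y * G.PstepA A y w) * G.PnA A n w z := by ring
      _ = (G.mu w * G.PstepA A w y) * G.PnA A n w z := by rw [G.PstepA_rev hconn A y w]
      _ = (G.mu w * G.PnA A n w z) * G.PstepA A w y := by ring
      _ = (G.mu z * G.PnA A n z w) * G.PstepA A w y := by rw [ih w z]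
      _ = G.mu z * (G.PnA A n z w * G.PstepA A w y) := by ring

lemma Gs_rev [Infinite V] (G : WeightedGraph V)
    (hconn : G.toSimpleGraph.Connected) {A : Set V} (hA : A.Finite) (y z : V) :
    G.mu y * G.Gs A y z = G.mu z * G.Gs A z y := by
  unfold Gs
  rw [← tsum_mul_left, ← tsum_mul_left]
  exact tsum_congr fun k => G.PnA_rev hconn hA k y z

lemma green_symm [Infinite V] (G : WeightedGraph V)
    (hconn : G.toSimpleGraph.Connected) {A : Set V} (hA : A.Finite) (y z : V) :
    G.green A y z = G.green A z y := by
  rw [green_eq, green_eq]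
  rw [div_eq_div_iff (ne_of_gt (G.mu_pos hconn z)) (ne_of_gt (G.mu_pos hconn y))]
  linear_combination G.Gs_rev hconn hA y z

lemma green_mul_mu (G : WeightedGraph V) [Infinite V]
    (hconn : G.toSimpleGraph.Connected) (A : Set V) (y z : V) :
    G.green A y z * G.mu z = G.Gs A y z := by
  rw [green_eq, div_mul_cancel₀ _ (ne_of_gt (G.mu_pos hconn z))]

lemma Gs_harmonic_step [Infinite V] (G : WeightedGraph V)
    (hconn : G.toSimpleGraph.Connected) {p0 : ℝ} (hp0 : 0 < p0) (hP0 : G.P0 p0)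
    {A : Set V} (hA : A.Finite) {y z : V} (hz : z ∈ A) (hzy : z ≠ y) :
    G.Gs A y z = ∑ w ∈ hA.toFinset, G.Gs A y w * G.PstepA A w z := by
  have hsum : Summable (fun k => G.PnA A k y z) := G.summable_PnA_k hconn hp0 hP0 hA y z
  unfold Gs
  rw [Summable.tsum_eq_zero_add hsum]
  have h0 : G.PnA A 0 y z = 0 := by
    show (if y = z ∧ y ∈ A then (1:ℝ) else 0) = 0
    rw [if_neg (fun h => hzy h.1.symm)]
  rw [h0, zero_add]
  have h1 : ∀ k, G.PnA A (k+1) y z = ∑ w ∈ hA.toFinset, G.PnA A k y w * G.PstepA A w z :=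
    fun k => G.PnA_succ_right hA k y z
  rw [tsum_congr h1, Summable.tsum_finsetSum (fun w _ =>
    (G.summable_PnA_k hconn hp0 hP0 hA y w).mul_right (G.PstepA A w z))]
  exact Finset.sum_congr rfl fun w _ => tsum_mul_right

lemma green_harmonic [Infinite V] (G : WeightedGraph V)
    (hconn : G.toSimpleGraph.Connected) {p0 : ℝ} (hp0 : 0 < p0) (hP0 : G.P0 p0)
    {A : Set V} (hA : A.Finite) {y z : V} (hz : z ∈ A) (hzy : z ≠ y) :
    (∑' u, G.Pstep z u * G.green A y u) = G.green A y z := by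
  have hterm : ∀ u, G.Pstep z u * G.green A y u = G.Gs A y u * G.Pstep u z / G.mu z := by
    intro u
    rw [green_eq]
    unfold Pstep
    rw [G.w_symm z u]
    field_simp
  rw [tsum_congr hterm]
  have hall : (∑' u, G.Gs A y u * G.Pstep u z / G.mu z) =
      (∑ u ∈ hA.toFinset, G.Gs A y u * G.Pstep u z) / G.mu z := by
    rw [tsum_div_const]
    congr 1
    apply tsum_eq_sum
    intro u hu
    rw [G.Gs_of_not_right (fun h => hu (hA.mem_toFinset.mpr h)) y, zero_mul]
  rw [hall, green_eq]
  congr 1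
  rw [G.Gs_harmonic_step hconn hp0 hP0 hA hz hzy]
  apply Finset.sum_congr rfl
  intro w hw
  rw [G.PstepA_eq (hA.mem_toFinset.mp hw) hz]

end WeightedGraph
namespace WeightedGraph

variable {V : Type*}

lemma summable_Pstep_mul (G : WeightedGraph V) (x : V) (f : V → ℝ) :
    Summable (fun z => G.Pstep x z * f z) := by
  apply summable_of_finite_support
  apply ((G.w_supp_finite x).subset (G.Pstep_supp x)).subset
  intro z hz
  simp only [Function.mem_support, ne_eq] at hz ⊢
  intro h; exact hz (by rw [h, zero_mul])

section Rep

variable [Infinite V] (G : WeightedGraph V)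
  {B : Set V} (hB : B.Finite) (u : V → ℝ)

/-- boundary defect of `u` relative to `B` -/
def fdef (G : WeightedGraph V) (hB : B.Finite) (u : V → ℝ) (z : V) : ℝ :=
  u z - ∑ w ∈ hB.toFinset, G.PstepA B z w * u w

lemma fdef_nonneg (hu0 : ∀ y, 0 ≤ u y)
    (hharm : ∀ z ∈ B, (∑' v, G.Pstep z v * u v) = u z) {z : V} (hz : z ∈ B) :
    0 ≤ G.fdef hB u z := by
  unfold fdef
  rw [sub_nonneg]
  calc ∑ w ∈ hB.toFinset, G.PstepA B z w * u w
      ≤ ∑ w ∈ hB.toFinset, G.Pstep z w * u w := by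
        apply Finset.sum_le_sum
        intro w _
        exact mul_le_mul_of_nonneg_right (G.PstepA_le_Pstep B z w) (hu0 w)
    _ ≤ ∑' w, G.Pstep z w * u w :=
        Summable.sum_le_tsum _ (fun w _ => mul_nonneg (G.Pstep_nonneg z w) (hu0 w))
          (G.summable_Pstep_mul z u)
    _ = u z := hharm z hz

lemma fdef_eq_zero_of_interior (hu0 : ∀ y, 0 ≤ u y)
    (hharm : ∀ z ∈ B, (∑' v, G.Pstep z v * u v) = u z) {z : V} (hz : z ∈ B)
    (hint : ∀ v, 0 < G.w z v → v ∈ B) : G.fdef hB u z = 0 := by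
  unfold fdef
  have h2 : (∑ w ∈ hB.toFinset, G.PstepA B z w * u w) =
      ∑ w ∈ hB.toFinset, G.Pstep z w * u w :=
    Finset.sum_congr rfl fun w hw => by rw [G.PstepA_eq hz (hB.mem_toFinset.mp hw)]
  rw [sub_eq_zero, ← hharm z hz, h2]
  apply tsum_eq_sum
  intro v hv
  have hvB : v ∉ B := fun h => hv (hB.mem_toFinset.mpr h)
  have hwzv : G.w z v = 0 := by
    by_contra h
    exact hvB (hint v (lt_of_le_of_ne (G.w_nonneg z v) (Ne.symm h)))
  unfold Pstep
  rw [hwzv, zero_div, zero_mul]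

lemma rep_identity
    (n : ℕ) {z : V} (hz : z ∈ B) :
    u z = (∑ k ∈ Finset.range n, ∑ w ∈ hB.toFinset, G.PnA B k z w * G.fdef hB u w) +
      ∑ w ∈ hB.toFinset, G.PnA B n z w * u w := by
  induction n with
  | zero =>
    rw [Finset.range_zero, Finset.sum_empty, zero_add]
    rw [Finset.sum_eq_single_of_mem z (hB.mem_toFinset.mpr hz)]
    · show u z = (if z = z ∧ z ∈ B then (1:ℝ) else 0) * u z
      rw [if_pos ⟨rfl, hz⟩, one_mul]
    · intro w _ hwz
      show G.PnA B 0 z w * u w = 0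
      show (if z = w ∧ z ∈ B then (1:ℝ) else 0) * u w = 0
      rw [if_neg (fun h => hwz h.1.symm), zero_mul]
  | succ n ih =>
    rw [Finset.sum_range_succ, ih]
    have key : ∑ w ∈ hB.toFinset, G.PnA B n z w * u w =
        (∑ w ∈ hB.toFinset, G.PnA B n z w * G.fdef hB u w) +
        ∑ w ∈ hB.toFinset, G.PnA B (n+1) z w * u w := by
      have h1 : ∀ w, u w = G.fdef hB u w + ∑ v ∈ hB.toFinset, G.PstepA B w v * u v := by
        intro w; unfold fdef; ring
      calc ∑ w ∈ hB.toFinset, G.PnA B n z w * u w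
          = ∑ w ∈ hB.toFinset, (G.PnA B n z w * G.fdef hB u w +
              ∑ v ∈ hB.toFinset, G.PnA B n z w * (G.PstepA B w v * u v)) := by
            apply Finset.sum_congr rfl
            intro w _
            rw [h1 w, mul_add, Finset.mul_sum]
        _ = (∑ w ∈ hB.toFinset, G.PnA B n z w * G.fdef hB u w) +
            ∑ w ∈ hB.toFinset, ∑ v ∈ hB.toFinset, G.PnA B n z w * (G.PstepA B w v * u v) := by
            rw [Finset.sum_add_distrib]
        _ = (∑ w ∈ hB.toFinset, G.PnA B n z w * G.fdef hB u w) +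
            ∑ v ∈ hB.toFinset, G.PnA B (n+1) z v * u v := by
            congr 1
            rw [Finset.sum_comm]
            apply Finset.sum_congr rfl
            intro v _
            rw [G.PnA_succ_right hB n z v, Finset.sum_mul]
            apply Finset.sum_congr rfl
            intro w _
            ring
    rw [key]
    ring

lemma rep (hconn : G.toSimpleGraph.Connected) {p0 : ℝ} (hp0 : 0 < p0) (hP0 : G.P0 p0)
    (hu0 : ∀ y, 0 ≤ u y)
    (hharm : ∀ z ∈ B, (∑' v, G.Pstep z v * u v) = u z) {z : V} (hz : z ∈ B) :
    u z = ∑ w ∈ hB.toFinset, G.Gs B z w * G.fdef hB u w := by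
  set a : ℕ → ℝ := fun k => ∑ w ∈ hB.toFinset, G.PnA B k z w * G.fdef hB u w with ha
  set Rn : ℕ → ℝ := fun n => ∑ w ∈ hB.toFinset, G.PnA B n z w * u w with hRn
  have ha0 : ∀ k, 0 ≤ a k := by
    intro k
    apply Finset.sum_nonneg
    intro w hw
    exact mul_nonneg (G.PnA_nonneg B k z w)
      (G.fdef_nonneg hB u hu0 hharm (hB.mem_toFinset.mp hw))
  have hR0 : ∀ n, 0 ≤ Rn n := by
    intro n
    apply Finset.sum_nonneg
    intro w _
    exact mul_nonneg (G.PnA_nonneg B n z w) (hu0 w)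
  set M : ℝ := ∑ w ∈ hB.toFinset, u w with hM
  have hRle : ∀ n, Rn n ≤ G.sv B n z * M := by
    intro n
    rw [G.sv_eq_sum hB, Finset.sum_mul]
    apply Finset.sum_le_sum
    intro w hw
    apply mul_le_mul_of_nonneg_left _ (G.PnA_nonneg B n z w)
    exact Finset.single_le_sum (fun v _ => hu0 v) hw
  have htendR : Filter.Tendsto Rn Filter.atTop (nhds 0) := by
    apply squeeze_zero hR0 hRle
    have := (G.tendsto_sv hconn hp0 hP0 hB z).mul_const M
    rwa [zero_mul] at this
  have hSR : ∀ n, ∑ k ∈ Finset.range n, a k = u z - Rn n := by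
    intro n
    have := G.rep_identity hB u n hz
    rw [this]; ring
  have hsum : Summable a := by
    apply summable_of_sum_range_le (c := u z) ha0
    intro n
    rw [hSR n]
    linarith [hR0 n]
  have htendS : Filter.Tendsto (fun n => ∑ k ∈ Finset.range n, a k)
      Filter.atTop (nhds (u z)) := by
    have h1 : Filter.Tendsto (fun n => u z - Rn n) Filter.atTop (nhds (u z - 0)) :=
      Filter.Tendsto.sub tendsto_const_nhds htendR
    rw [sub_zero] at h1
    exact (Filter.tendsto_congr (fun n => (hSR n).symm)).mp h1
  have huz : ∑' k, a k = u z :=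
    tendsto_nhds_unique hsum.hasSum.tendsto_sum_nat htendS
  rw [← huz, ha]
  rw [Summable.tsum_finsetSum (fun w _ =>
    (G.summable_PnA_k hconn hp0 hP0 hB z w).mul_right (G.fdef hB u w))]
  apply Finset.sum_congr rfl
  intro w _
  rw [tsum_mul_right]
  rfl

end Rep

end WeightedGraph
namespace WeightedGraph

variable {V : Type*}

lemma vol_nonneg (G : WeightedGraph V) (x : V) (r : ℝ) : 0 ≤ G.vol x r :=
  tsum_nonneg fun y => G.mu_nonneg y.1

lemma mv_to_mvg [Infinite V] (G : WeightedGraph V)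
    (hconn : G.toSimpleGraph.Connected) (p0 : ℝ) (hp0 : 0 < p0) (hP0 : G.P0 p0) :
    G.MV → G.MVG := by
  rintro ⟨C, hC, hMV⟩
  refine ⟨C + 2, by linarith, ?_⟩
  intro x R y hR hd
  set B := G.ball x R with hBdef
  have hB : B.Finite := G.ball_finite hconn x R
  have hdR : (0:ℝ) < (G.gdist x y : ℝ) := by exact_mod_cast hd
  have hvold : 0 < G.vol x (G.gdist x y : ℝ) := G.vol_pos hconn x hdR
  have hts : 0 ≤ ∑' z : G.ball x (G.gdist x y : ℝ), G.green B y z.1 * G.mu z.1 :=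
    tsum_nonneg fun z => mul_nonneg (G.green_nonneg B y z.1) (G.mu_nonneg z.1)
  by_cases hyB : y ∈ B
  · have harm : G.Harmonic (G.ball x ((G.gdist x y : ℕ) : ℝ)) (G.green B y) := by
      intro z hz
      have hz1 : (G.gdist x z : ℝ) < ((G.gdist x y : ℕ) : ℝ) := hz
      have hz2 : G.gdist x z < G.gdist x y := by exact_mod_cast hz1
      have hzB : z ∈ B := by
        show (G.gdist x z : ℝ) < R
        exact lt_of_lt_of_le hz1 (le_of_lt hyB)
      have hzy : z ≠ y := by
        intro h; rw [h] at hz2; omega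
      exact G.green_harmonic hconn hp0 hP0 hB hzB hzy
    have h1 := hMV x ((G.gdist x y : ℕ) : ℝ) (G.green B y) hdR
      (G.green_nonneg B y) harm
    refine le_trans h1 ?_
    refine mul_le_mul_of_nonneg_right ?_ hts
    rw [div_le_div_iff₀ hvold hvold]
    nlinarith
  · rw [G.green_of_not_left hyB x]
    exact mul_nonneg (div_nonneg (by linarith) (le_of_lt hvold)) hts

lemma mvg_to_g01 [Infinite V] (G : WeightedGraph V)
    (hconn : G.toSimpleGraph.Connected) (p0 : ℝ) (hp0 : 0 < p0) (hP0 : G.P0 p0)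
    (hTC : G.TC) : G.MVG → G.G01 := by
  rintro ⟨C, hC, hMVG⟩
  obtain ⟨CT, hCT, hTCf⟩ := hTC
  refine ⟨C * CT, one_lt_mul (by linarith) hCT, ?_⟩
  intro x R y hR hd
  set B := G.ball x R with hBdef
  have hB : B.Finite := G.ball_finite hconn x R
  have hdR : (0:ℝ) < (G.gdist x y : ℝ) := by exact_mod_cast hd
  have hvold : 0 < G.vol x (G.gdist x y : ℝ) := G.vol_pos hconn x hdR
  have hmex : 0 ≤ G.mexit x R := G.mexit_nonneg x R
  by_cases hyB : y ∈ B
  · have hMw := hMVG x R y hR hd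
    have hdlt : ((G.gdist x y : ℕ) : ℝ) < R := hyB
    have hBfin : (G.ball x ((G.gdist x y : ℕ) : ℝ)).Finite :=
      G.ball_finite hconn x _
    have hTs : (∑' z : G.ball x ((G.gdist x y : ℕ) : ℝ), G.green B y z.1 * G.mu z.1) =
        ∑ z ∈ hBfin.toFinset, G.green B y z * G.mu z :=
      tsum_set_eq_sum hBfin (fun v => G.green B y v * G.mu v)
    have hTle : ∑ z ∈ hBfin.toFinset, G.green B y z * G.mu z ≤
        ∑ z ∈ hB.toFinset, G.Gs B y z := by
      calc ∑ z ∈ hBfin.toFinset, G.green B y z * G.mu z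
          ≤ ∑ z ∈ hB.toFinset, G.green B y z * G.mu z := by
            apply Finset.sum_le_sum_of_subset_of_nonneg
            · intro z hz
              rw [Set.Finite.mem_toFinset] at hz ⊢
              exact G.ball_mono x (le_of_lt hdlt) hz
            · intro z _ _
              exact mul_nonneg (G.green_nonneg B y z) (G.mu_nonneg z)
        _ = ∑ z ∈ hB.toFinset, G.Gs B y z :=
            Finset.sum_congr rfl fun z _ => G.green_mul_mu hconn B y z
    have hme : ∑ z ∈ hB.toFinset, G.Gs B y z = G.meanExit B y :=
      G.sum_Gs_eq_meanExit hconn hp0 hP0 hB y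
    have hsub : B ⊆ G.ball y (2 * R) := by
      intro z hz
      show (G.gdist y z : ℝ) < 2 * R
      have htri : G.gdist y z ≤ G.gdist y x + G.gdist x z := G.gdist_triangle hconn y x z
      have h1 : (G.gdist y z : ℝ) ≤ (G.gdist y x : ℝ) + (G.gdist x z : ℝ) := by
        exact_mod_cast htri
      have h2 : (G.gdist y x : ℝ) < R := by rw [G.gdist_comm y x]; exact hyB
      have h3 : (G.gdist x z : ℝ) < R := hz
      linarith
    have hmono : G.meanExit B y ≤ G.mexit y (2 * R) :=
      G.meanExit_mono hconn hp0 hP0 hB (G.ball_finite hconn y (2*R)) hsub y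
    have hxby : x ∈ G.ball y R := by
      show (G.gdist y x : ℝ) < R
      rw [G.gdist_comm y x]; exact hyB
    have hTCy : G.mexit y (2 * R) ≤ CT * G.mexit x R := hTCf y R hR x hxby
    have hchain : (∑' z : G.ball x ((G.gdist x y : ℕ) : ℝ),
        G.green B y z.1 * G.mu z.1) ≤ CT * G.mexit x R := by
      rw [hTs]; linarith
    refine le_trans hMw ?_
    have hfin : C / G.vol x ((G.gdist x y : ℕ) : ℝ) *
        (∑' z : G.ball x ((G.gdist x y : ℕ) : ℝ), G.green B y z.1 * G.mu z.1) ≤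
        C / G.vol x ((G.gdist x y : ℕ) : ℝ) * (CT * G.mexit x R) :=
      mul_le_mul_of_nonneg_left hchain (div_nonneg (by linarith) (le_of_lt hvold))
    refine le_trans hfin (le_of_eq ?_)
    ring
  · rw [G.green_of_not_left hyB x]
    apply div_nonneg _ (le_of_lt hvold)
    have h1 : (0:ℝ) ≤ C * CT := by nlinarith
    nlinarith

lemma mvg_to_mv [Infinite V] (G : WeightedGraph V)
    (hconn : G.toSimpleGraph.Connected) (p0 : ℝ) (hp0 : 0 < p0) (hP0 : G.P0 p0)
    (hVD : G.VD) : G.MVG → G.MV := by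
  rintro ⟨C, hC, hMVG⟩
  obtain ⟨D, hD, hVDD⟩ := hVD
  refine ⟨C * D + D, by nlinarith, ?_⟩
  intro x R u hR hu0 hharm
  set B := G.ball x R with hBdef
  have hB : B.Finite := G.ball_finite hconn x R
  have hvolR : 0 < G.vol x R := G.vol_pos hconn x hR
  have htsum_eq : (∑' y : G.ball x R, u y.1 * G.mu y.1) =
      ∑ w ∈ hB.toFinset, u w * G.mu w := tsum_set_eq_sum hB (fun w => u w * G.mu w)
  have hSnn : 0 ≤ ∑ w ∈ hB.toFinset, u w * G.mu w :=
    Finset.sum_nonneg fun w _ => mul_nonneg (hu0 w) (G.mu_nonneg w)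
  rw [htsum_eq]
  by_cases hR2 : R ≤ 2
  · have h3 : G.vol x (2 * 1) ≤ D * G.vol x 1 := hVDD x 1 one_pos
    rw [mul_one, G.vol_one hconn] at h3
    have h1 : G.vol x R ≤ D * G.mu x :=
      le_trans (G.vol_mono hconn x hR2) h3
    have hx𝔹 : x ∈ hB.toFinset := hB.mem_toFinset.mpr (G.mem_ball_self x hR)
    have h4 : u x * G.mu x ≤ ∑ w ∈ hB.toFinset, u w * G.mu w :=
      Finset.single_le_sum (fun w _ => mul_nonneg (hu0 w) (G.mu_nonneg w)) hx𝔹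
    rw [div_mul_eq_mul_div, le_div_iff₀ hvolR]
    have e2 : D * (u x * G.mu x) ≤ D * ∑ w ∈ hB.toFinset, u w * G.mu w :=
      mul_le_mul_of_nonneg_left h4 (le_of_lt hD)
    have e3 : 0 ≤ C * D * ∑ w ∈ hB.toFinset, u w * G.mu w :=
      mul_nonneg (mul_nonneg (by linarith) (le_of_lt hD)) hSnn
    calc u x * G.vol x R ≤ u x * (D * G.mu x) :=
          mul_le_mul_of_nonneg_left h1 (hu0 x)
      _ = D * (u x * G.mu x) := by ring
      _ ≤ D * ∑ w ∈ hB.toFinset, u w * G.mu w := e2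
      _ ≤ (C * D + D) * ∑ w ∈ hB.toFinset, u w * G.mu w := by
          have hexp : (C * D + D) * ∑ w ∈ hB.toFinset, u w * G.mu w =
              C * D * (∑ w ∈ hB.toFinset, u w * G.mu w) +
              D * ∑ w ∈ hB.toFinset, u w * G.mu w := by ring
          linarith
  · push_neg at hR2
    have hrep : ∀ z ∈ B, u z = ∑ w ∈ hB.toFinset, G.Gs B z w * G.fdef hB u w :=
      fun z hz => G.rep hB u hconn hp0 hP0 hu0 hharm hz
    have hfnn : ∀ w ∈ hB.toFinset, 0 ≤ G.fdef hB u w :=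
      fun w hw => G.fdef_nonneg hB u hu0 hharm (hB.mem_toFinset.mp hw)
    have hbound : ∀ w ∈ hB.toFinset, G.Gs B x w * G.fdef hB u w ≤
        C * D / G.vol x R *
          ((∑ z ∈ hB.toFinset, G.Gs B w z) * (G.mu w * G.fdef hB u w)) := by
      intro w hw
      have hwB : w ∈ B := hB.mem_toFinset.mp hw
      by_cases hfw : G.fdef hB u w = 0
      · rw [hfw, mul_zero, mul_zero, mul_zero, mul_zero]
      · have hout : ∃ v, 0 < G.w w v ∧ v ∉ B := by
          by_contra h
          push_neg at h
          exact hfw (G.fdef_eq_zero_of_interior hB u hu0 hharm hwB h)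
        obtain ⟨v, hwv, hvB⟩ := hout
        have hdv : R ≤ (G.gdist x v : ℝ) := by
          by_contra h; push_neg at h; exact hvB h
        have htri : G.gdist x v ≤ G.gdist x w + 1 := G.gdist_adj_le hconn hwv
        have hdw1 : R - 1 ≤ (G.gdist x w : ℝ) := by
          have h1 : (G.gdist x v : ℝ) ≤ (G.gdist x w : ℝ) + 1 := by exact_mod_cast htri
          linarith
        have hdwpos : 0 < G.gdist x w := by
          by_contra h
          push_neg at h
          have h0 : G.gdist x w = 0 := Nat.le_zero.mp h
          rw [h0] at hdw1
          norm_num at hdw1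
          linarith
        have hdwR : (0:ℝ) < (G.gdist x w : ℝ) := by exact_mod_cast hdwpos
        have hvoldw : 0 < G.vol x ((G.gdist x w : ℕ) : ℝ) := G.vol_pos hconn x hdwR
        have hvR2 : G.vol x R ≤ D * G.vol x ((G.gdist x w : ℕ) : ℝ) := by
          have h2 : G.vol x (2 * (R/2)) ≤ D * G.vol x (R/2) := hVDD x (R/2) (by linarith)
          have h2' : G.vol x R ≤ D * G.vol x (R/2) := by
            rw [show (2 : ℝ) * (R/2) = R by ring] at h2
            exact h2
          have h3 : G.vol x (R/2) ≤ G.vol x ((G.gdist x w : ℕ) : ℝ) :=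
            G.vol_mono hconn x (by linarith)
          nlinarith
        have hMw := hMVG x R w hR hdwpos
        have hBfin : (G.ball x ((G.gdist x w : ℕ) : ℝ)).Finite := G.ball_finite hconn x _
        have hTs : (∑' z : G.ball x ((G.gdist x w : ℕ) : ℝ),
            G.green B w z.1 * G.mu z.1) =
            ∑ z ∈ hBfin.toFinset, G.green B w z * G.mu z :=
          tsum_set_eq_sum hBfin (fun v => G.green B w v * G.mu v)
        have hdltR : ((G.gdist x w : ℕ) : ℝ) < R := hwB
        have hTle : ∑ z ∈ hBfin.toFinset, G.green B w z * G.mu z ≤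
            ∑ z ∈ hB.toFinset, G.Gs B w z := by
          calc ∑ z ∈ hBfin.toFinset, G.green B w z * G.mu z
              ≤ ∑ z ∈ hB.toFinset, G.green B w z * G.mu z := by
                apply Finset.sum_le_sum_of_subset_of_nonneg
                · intro z hz
                  rw [Set.Finite.mem_toFinset] at hz ⊢
                  exact G.ball_mono x (le_of_lt hdltR) hz
                · intro z _ _
                  exact mul_nonneg (G.green_nonneg B w z) (G.mu_nonneg z)
            _ = ∑ z ∈ hB.toFinset, G.Gs B w z :=
                Finset.sum_congr rfl fun z _ => G.green_mul_mu hconn B w z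
        have hT0 : 0 ≤ ∑ z ∈ hBfin.toFinset, G.green B w z * G.mu z :=
          Finset.sum_nonneg fun z _ => mul_nonneg (G.green_nonneg B w z) (G.mu_nonneg z)
        have hdivle : C / G.vol x ((G.gdist x w : ℕ) : ℝ) ≤ C * D / G.vol x R := by
          rw [div_le_div_iff₀ hvoldw hvolR]
          nlinarith
        have hgreen_le : G.green B w x ≤
            C * D / G.vol x R * (∑ z ∈ hB.toFinset, G.Gs B w z) := by
          refine le_trans hMw ?_
          rw [hTs]
          calc C / G.vol x ((G.gdist x w : ℕ) : ℝ) *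
                (∑ z ∈ hBfin.toFinset, G.green B w z * G.mu z)
              ≤ C * D / G.vol x R * (∑ z ∈ hBfin.toFinset, G.green B w z * G.mu z) :=
                mul_le_mul_of_nonneg_right hdivle hT0
            _ ≤ C * D / G.vol x R * (∑ z ∈ hB.toFinset, G.Gs B w z) :=
                mul_le_mul_of_nonneg_left hTle
                  (div_nonneg (by nlinarith) (le_of_lt hvolR))
        have hmul : 0 ≤ G.mu w * G.fdef hB u w :=
          mul_nonneg (G.mu_nonneg w) (hfnn w hw)
        calc G.Gs B x w * G.fdef hB u w
            = G.green B w x * (G.mu w * G.fdef hB u w) := by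
              rw [← G.green_mul_mu hconn B x w, G.green_symm hconn hB x w]; ring
          _ ≤ (C * D / G.vol x R * (∑ z ∈ hB.toFinset, G.Gs B w z)) *
              (G.mu w * G.fdef hB u w) := mul_le_mul_of_nonneg_right hgreen_le hmul
          _ = C * D / G.vol x R *
              ((∑ z ∈ hB.toFinset, G.Gs B w z) * (G.mu w * G.fdef hB u w)) := by ring
    have hux : u x = ∑ w ∈ hB.toFinset, G.Gs B x w * G.fdef hB u w :=
      hrep x (G.mem_ball_self x hR)
    have h2 : u x ≤ C * D / G.vol x R *
        ∑ w ∈ hB.toFinset, (∑ z ∈ hB.toFinset, G.Gs B w z) *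
          (G.mu w * G.fdef hB u w) := by
      rw [hux]
      calc ∑ w ∈ hB.toFinset, G.Gs B x w * G.fdef hB u w
          ≤ ∑ w ∈ hB.toFinset, C * D / G.vol x R *
              ((∑ z ∈ hB.toFinset, G.Gs B w z) * (G.mu w * G.fdef hB u w)) :=
            Finset.sum_le_sum hbound
        _ = C * D / G.vol x R * ∑ w ∈ hB.toFinset,
              (∑ z ∈ hB.toFinset, G.Gs B w z) * (G.mu w * G.fdef hB u w) := by
            rw [Finset.mul_sum]
    have h3 : ∑ w ∈ hB.toFinset, (∑ z ∈ hB.toFinset, G.Gs B w z) *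
        (G.mu w * G.fdef hB u w) = ∑ z ∈ hB.toFinset, G.mu z * u z := by
      have hterm : ∀ w ∈ hB.toFinset,
          (∑ z ∈ hB.toFinset, G.Gs B w z) * (G.mu w * G.fdef hB u w) =
          ∑ z ∈ hB.toFinset, G.mu z * (G.Gs B z w * G.fdef hB u w) := by
        intro w _
        rw [Finset.sum_mul]
        apply Finset.sum_congr rfl
        intro z _
        linear_combination (G.fdef hB u w) * G.Gs_rev hconn hB w z
      rw [Finset.sum_congr rfl hterm, Finset.sum_comm]
      apply Finset.sum_congr rfl
      intro z hz
      rw [← Finset.mul_sum, ← hrep z (hB.mem_toFinset.mp hz)]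
    have h4 : ∑ z ∈ hB.toFinset, G.mu z * u z = ∑ w ∈ hB.toFinset, u w * G.mu w :=
      Finset.sum_congr rfl fun z _ => mul_comm _ _
    rw [h3, h4] at h2
    refine le_trans h2 ?_
    refine mul_le_mul_of_nonneg_right ?_ hSnn
    rw [div_le_div_iff₀ hvolR hvolR]
    nlinarith

end WeightedGraph
/-- **Lemma 3.16.** Under `(p0)`, `(VD)` and `(TC)`: `(MVG) ⇔ (MV) ⇒ (g01)`. -/
theorem mvg_iff_mv_imp_g01 {V : Type*} [Countable V] [Infinite V]
    (G : WeightedGraph V) (hconn : G.toSimpleGraph.Connected)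
    (p0 : ℝ) (hp0 : 0 < p0) (hP0 : G.P0 p0) (hVD : G.VD) (hTC : G.TC) :
    (G.MVG ↔ G.MV) ∧ (G.MV → G.G01) :=
  ⟨⟨fun hmvg => G.mvg_to_mv hconn p0 hp0 hP0 hVD hmvg,
    fun hmv => G.mv_to_mvg hconn p0 hp0 hP0 hmv⟩,
   fun hmv => G.mvg_to_g01 hconn p0 hp0 hP0 hTC (G.mv_to_mvg hconn p0 hp0 hP0 hmv)⟩
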